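/- Let T₁, T₂ be linear, trace-preserving, positive maps on M_d(ℂ), ρ₂ a stationary state of T₂, and ρ₁ := T₁^∞(ρ₂). Then ‖ρ₁ − ρ₂‖₁ ≤ τ(Z(T₁)) · ‖T₁ − T₂‖_{1→1}, where Z(T₁) = (id − (T₁ − T₁^∞))^{-1}. -/

import Mathlib

open Matrix Filter
open scoped ComplexOrder

/-- Trace norm (Schatten 1-norm) of a complex matrix: `tr √(XᴴX)`. -/
noncomputable def traceNorm {d : ℕ} (X : Matrix (Fin d) (Fin d) ℂ) : ℝ :=
  let hA := Matrix.PosSemidef.isHermitian (Matrix.posSemidef_conjTranspose_mul_self X)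
  (hA.eigenvectorUnitary.1 * diagonal (fun i => ((Real.sqrt (hA.eigenvalues i) : ℝ) : ℂ)) *
    (star hA.eigenvectorUnitary : Matrix (Fin d) (Fin d) ℂ)).trace.re

/-- Linear endomorphisms of `M_d(ℂ)` (superoperators). -/
abbrev MatEnd (d : ℕ) := Module.End ℂ (Matrix (Fin d) (Fin d) ℂ)

/-- Trace-preserving map. -/
def IsTP {d : ℕ} (T : MatEnd d) : Prop := ∀ X, (T X).trace = X.trace

/-- Positive map: maps PSD matrices to PSD matrices. -/
def IsPos {d : ℕ} (T : MatEnd d) : Prop := ∀ X, X.PosSemidef → (T X).PosSemidef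

/-- Hermiticity-preserving map. -/
def IsHP {d : ℕ} (T : MatEnd d) : Prop := ∀ X, (T X)ᴴ = T Xᴴ

/-- Induced 1→1 norm: `sup_{X ≠ 0} ‖T X‖₁ / ‖X‖₁`. -/
noncomputable def norm1to1 {d : ℕ} (T : MatEnd d) : ℝ :=
  sSup {r | ∃ X, X ≠ 0 ∧ r = traceNorm (T X) / traceNorm X}

/-- Trace-norm contraction coefficient: sup over nonzero Hermitian traceless `σ`. -/
noncomputable def tau {d : ℕ} (T : MatEnd d) : ℝ :=
  sSup {r | ∃ σ : Matrix (Fin d) (Fin d) ℂ,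
    σ.IsHermitian ∧ σ.trace = 0 ∧ σ ≠ 0 ∧ r = traceNorm (T σ) / traceNorm σ}

/-- Density matrix: positive semidefinite with unit trace. -/
def IsDensity {d : ℕ} (ρ : Matrix (Fin d) (Fin d) ℂ) : Prop := ρ.PosSemidef ∧ ρ.trace = 1

/-- `Tinf` is the Cesàro-mean fixed point projection of `T`. -/
def IsCesaroProj {d : ℕ} (T Tinf : MatEnd d) : Prop :=
  ∀ X, Tendsto (fun n : ℕ => (n : ℂ)⁻¹ • ∑ k ∈ Finset.range n, (T ^ (k + 1)) X)
    atTop (nhds (Tinf X))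

/-! ### Auxiliary spectral lemmas -/

private lemma herm_trace_eq {n : Type*} [Fintype n] [DecidableEq n]
    {A : Matrix n n ℂ} (hA : A.IsHermitian) :
    A.trace = ∑ i, (hA.eigenvalues i : ℂ) := by
  conv_lhs => rw [hA.spectral_theorem]
  rw [Unitary.conjStarAlgAut_apply, Matrix.trace_mul_cycle,
    (Matrix.mem_unitaryGroup_iff').mp (Matrix.IsHermitian.eigenvectorUnitary hA).2, Matrix.one_mul,
    Matrix.trace_diagonal]
  rfl

private lemma herm_trace_sq_eq {n : Type*} [Fintype n] [DecidableEq n]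
    {A : Matrix n n ℂ} (hA : A.IsHermitian) :
    (A * A).trace = ∑ i, (hA.eigenvalues i : ℂ) ^ 2 := by
  set U : Matrix n n ℂ := (hA.eigenvectorUnitary : Matrix n n ℂ)
  set D : Matrix n n ℂ := Matrix.diagonal (RCLike.ofReal ∘ hA.eigenvalues)
  have hU : star U * U = 1 :=
    (Matrix.mem_unitaryGroup_iff').mp (Matrix.IsHermitian.eigenvectorUnitary hA).2
  have h1 : A * A = U * (D * D) * star U := by
    conv_lhs => rw [hA.spectral_theorem]
    simp only [Unitary.conjStarAlgAut_apply, Matrix.mul_assoc]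
    rw [← Matrix.mul_assoc (star U) U, hU, Matrix.one_mul]
  rw [h1, Matrix.trace_mul_cycle, ← Matrix.mul_assoc, hU, Matrix.one_mul,
    Matrix.diagonal_mul_diagonal, Matrix.trace_diagonal]
  simp [sq]

private lemma psd_trace_re_eq {n : Type*} [Fintype n] [DecidableEq n]
    {A : Matrix n n ℂ} (hA : A.PosSemidef) :
    A.trace.re = ∑ i, hA.1.eigenvalues i := by
  rw [herm_trace_eq hA.1]
  simp [Complex.re_sum]

private lemma psd_trace_nonneg {n : Type*} [Fintype n] [DecidableEq n]
    {A : Matrix n n ℂ} (hA : A.PosSemidef) : 0 ≤ A.trace.re := by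
  rw [psd_trace_re_eq hA]
  exact Finset.sum_nonneg fun i _ => hA.eigenvalues_nonneg i

private lemma psd_trace_sq_le {n : Type*} [Fintype n] [DecidableEq n]
    {A : Matrix n n ℂ} (hA : A.PosSemidef) :
    (A * A).trace.re ≤ A.trace.re ^ 2 := by
  rw [psd_trace_re_eq hA, herm_trace_sq_eq hA.1]
  have h : (∑ i, ((hA.1.eigenvalues i : ℂ)) ^ 2).re = ∑ i, (hA.1.eigenvalues i) ^ 2 := by
    simp [Complex.re_sum, ← Complex.ofReal_pow]
  rw [h]
  exact Finset.sum_sq_le_sq_sum_of_nonneg fun i _ => hA.eigenvalues_nonneg i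

private lemma psd_sq_trace_le {n : Type*} [Fintype n] [DecidableEq n]
    {A : Matrix n n ℂ} (hA : A.PosSemidef) :
    A.trace.re ^ 2 ≤ (Fintype.card n) * (A * A).trace.re := by
  rw [psd_trace_re_eq hA, herm_trace_sq_eq hA.1]
  have h : (∑ i, ((hA.1.eigenvalues i : ℂ)) ^ 2).re = ∑ i, (hA.1.eigenvalues i) ^ 2 := by
    simp [Complex.re_sum, ← Complex.ofReal_pow]
  rw [h]
  have := sq_sum_le_card_mul_sum_sq (s := (Finset.univ : Finset n)) (f := hA.1.eigenvalues)
  simpa using this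

/-! ### Trace norm lemmas -/

section tn
variable {d : ℕ} (X : Matrix (Fin d) (Fin d) ℂ)

private lemma eig_congr' {n : Type*} [Fintype n] [DecidableEq n] {A B : Matrix n n ℂ}
    (hA : A.IsHermitian) (hB : B.IsHermitian) (h : A = B) : hA.eigenvalues = hB.eigenvalues := by
  subst h; rfl

private lemma traceNorm_eq_sum : traceNorm X =
    ∑ i, Real.sqrt ((Matrix.posSemidef_conjTranspose_mul_self X).1.eigenvalues i) := by
  unfold traceNorm
  simp only []
  rw [Matrix.trace_mul_cycle,
    (Matrix.mem_unitaryGroup_iff').mp (Matrix.IsHermitian.eigenvectorUnitary _).2, Matrix.one_mul,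
    Matrix.trace_diagonal]
  simp [Complex.re_sum]

lemma traceNorm_nonneg : 0 ≤ traceNorm X := by
  rw [traceNorm_eq_sum]
  exact Finset.sum_nonneg fun i _ => Real.sqrt_nonneg _

private lemma conj_mul_trace_re : (Xᴴ * X).trace.re = ∑ j, ∑ i, ‖X i j‖ ^ 2 := by
  simp only [Matrix.trace, Matrix.diag, Matrix.mul_apply, Matrix.conjTranspose_apply,
    Complex.re_sum]
  congr 1; ext j; congr 1; ext i
  rw [show star (X i j) * X i j = (starRingEnd ℂ) (X i j) * X i j from rfl, Complex.conj_mul']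
  simp [← Complex.ofReal_pow]

private lemma fro_le_traceNorm : Real.sqrt ((Xᴴ * X).trace.re) ≤ traceNorm X := by
  set hA := Matrix.posSemidef_conjTranspose_mul_self X
  have hs : ∀ i, hA.1.eigenvalues i = Real.sqrt (hA.1.eigenvalues i) ^ 2 := fun i =>
    (Real.sq_sqrt (hA.eigenvalues_nonneg i)).symm
  rw [traceNorm_eq_sum, psd_trace_re_eq hA]
  conv_lhs => rw [Finset.sum_congr rfl fun i _ => hs i]
  calc Real.sqrt (∑ i, Real.sqrt (hA.1.eigenvalues i) ^ 2)
      ≤ Real.sqrt ((∑ i, Real.sqrt (hA.1.eigenvalues i)) ^ 2) :=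
        Real.sqrt_le_sqrt (Finset.sum_sq_le_sq_sum_of_nonneg fun i _ => Real.sqrt_nonneg _)
    _ = ∑ i, Real.sqrt (hA.1.eigenvalues i) :=
        Real.sqrt_sq (Finset.sum_nonneg fun i _ => Real.sqrt_nonneg _)

private lemma traceNorm_le_fro : traceNorm X ≤ Real.sqrt d * Real.sqrt ((Xᴴ * X).trace.re) := by
  set hA := Matrix.posSemidef_conjTranspose_mul_self X
  have hs : ∀ i, hA.1.eigenvalues i = Real.sqrt (hA.1.eigenvalues i) ^ 2 := fun i =>
    (Real.sq_sqrt (hA.eigenvalues_nonneg i)).symm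
  rw [traceNorm_eq_sum, psd_trace_re_eq hA]
  conv_rhs => rw [Finset.sum_congr rfl fun i _ => hs i]
  have := sq_sum_le_card_mul_sum_sq (s := (Finset.univ : Finset (Fin d)))
    (f := fun i => Real.sqrt (hA.1.eigenvalues i))
  rw [← Real.sqrt_mul (Nat.cast_nonneg _)]
  calc ∑ i, Real.sqrt (hA.1.eigenvalues i)
      = Real.sqrt ((∑ i, Real.sqrt (hA.1.eigenvalues i)) ^ 2) :=
        (Real.sqrt_sq (Finset.sum_nonneg fun i _ => Real.sqrt_nonneg _)).symm
    _ ≤ _ := Real.sqrt_le_sqrt (by simpa using this)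

lemma traceNorm_pos (h : X ≠ 0) : 0 < traceNorm X := by
  have h1 : 0 < (Xᴴ * X).trace.re := by
    rw [conj_mul_trace_re]
    obtain ⟨i, j, hij⟩ : ∃ i j, X i j ≠ 0 := by
      by_contra hc
      push_neg at hc
      exact h (by ext i j; simp [hc i j])
    have hp : (0:ℝ) < ‖X i j‖ ^ 2 := by
      have := norm_pos_iff.mpr hij
      positivity
    calc (0:ℝ) < ‖X i j‖ ^ 2 := hp
      _ ≤ ∑ j', ∑ i', ‖X i' j'‖ ^ 2 := by
          apply Finset.single_le_sum (f := fun j' => ∑ i', ‖X i' j'‖ ^ 2)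
            (fun j' _ => Finset.sum_nonneg fun i' _ => by positivity)
            (Finset.mem_univ j) |>.trans'
          exact Finset.single_le_sum (f := fun i' => ‖X i' j‖ ^ 2) (fun i' _ => by positivity)
            (Finset.mem_univ i)
  calc (0:ℝ) < Real.sqrt ((Xᴴ * X).trace.re) := Real.sqrt_pos.mpr h1
    _ ≤ traceNorm X := fro_le_traceNorm X

section sq
open scoped MatrixOrder

private lemma cfc_sqrt_self_sq {ρ : Matrix (Fin d) (Fin d) ℂ} (hρ : ρ.PosSemidef)
    (hA : (ρᴴ * ρ).IsHermitian) : hA.cfc Real.sqrt = ρ := by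
  rw [← hA.cfc_eq, ← cfcₙ_eq_cfc (hf0 := Real.sqrt_zero), ← CFC.sqrt_eq_real_sqrt _ (Matrix.posSemidef_conjTranspose_mul_self ρ).nonneg]
  exact CFC.sqrt_unique (by rw [hρ.1.eq]) hρ.nonneg

end sq

lemma traceNorm_of_posSemidef {ρ : Matrix (Fin d) (Fin d) ℂ} (hρ : ρ.PosSemidef) :
    traceNorm ρ = ρ.trace.re := by
  have h := cfc_sqrt_self_sq hρ (Matrix.posSemidef_conjTranspose_mul_self ρ).isHermitian
  rw [Matrix.IsHermitian.cfc, Unitary.conjStarAlgAut_apply] at h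
  unfold traceNorm
  conv_rhs => rw [← h]
  rfl

lemma traceNorm_neg : traceNorm (-X) = traceNorm X := by
  rw [traceNorm_eq_sum, traceNorm_eq_sum, eig_congr' (Matrix.posSemidef_conjTranspose_mul_self (-X)).1
    (Matrix.posSemidef_conjTranspose_mul_self X).1 (by simp)]

lemma traceNorm_zero : traceNorm (0 : Matrix (Fin d) (Fin d) ℂ) = 0 := by
  apply le_antisymm _ (traceNorm_nonneg 0)
  calc traceNorm (0 : Matrix (Fin d) (Fin d) ℂ) ≤ _ := traceNorm_le_fro 0
    _ = 0 := by simp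

end tn

/-- Any superoperator is bounded in trace norm. -/
lemma exists_traceNorm_bound {d : ℕ} (L : MatEnd d) :
    ∃ C : ℝ, 0 ≤ C ∧ ∀ X, traceNorm (L X) ≤ C * traceNorm X := by
  letI : NormedAddCommGroup (Matrix (Fin d) (Fin d) ℂ) := Matrix.frobeniusNormedAddCommGroup
  letI : NormedSpace ℂ (Matrix (Fin d) (Fin d) ℂ) := Matrix.frobeniusNormedSpace
  have hfro : ∀ X : Matrix (Fin d) (Fin d) ℂ, Real.sqrt ((Xᴴ * X).trace.re) = ‖X‖ := by
    intro X
    rw [Matrix.frobenius_norm_def, conj_mul_trace_re, Finset.sum_comm,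
      Real.sqrt_eq_rpow]
    congr 1
    refine Finset.sum_congr rfl fun i _ => Finset.sum_congr rfl fun j _ => ?_
    rw [← Real.rpow_natCast ‖X i j‖ 2]
    norm_num
  let L' := LinearMap.toContinuousLinearMap L
  obtain ⟨C, hC0, hCb⟩ := L'.bound
  refine ⟨Real.sqrt d * C, by positivity, fun X => ?_⟩
  calc traceNorm (L X) ≤ Real.sqrt d * Real.sqrt (((L X)ᴴ * (L X)).trace.re) :=
        traceNorm_le_fro (L X)
    _ = Real.sqrt d * ‖L' X‖ := by rw [hfro]; rfl
    _ ≤ Real.sqrt d * (C * ‖X‖) := by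
        apply mul_le_mul_of_nonneg_left (hCb X) (Real.sqrt_nonneg _)
    _ = Real.sqrt d * C * Real.sqrt ((Xᴴ * X).trace.re) := by rw [hfro]; ring
    _ ≤ Real.sqrt d * C * traceNorm X := by
        apply mul_le_mul_of_nonneg_left (fro_le_traceNorm X) (by positivity)

/-! ### Cesàro projection lemmas -/

section cesaro
variable {d : ℕ} {T Tinf : MatEnd d}

lemma cesaro_comm (hinf : IsCesaroProj T Tinf) (X : Matrix (Fin d) (Fin d) ℂ) :
    T (Tinf X) = Tinf X := by
  have hc : Continuous (T : Matrix (Fin d) (Fin d) ℂ → Matrix (Fin d) (Fin d) ℂ) :=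
    T.continuous_of_finiteDimensional
  set mean : ℕ → Matrix (Fin d) (Fin d) ℂ :=
    fun n => (n : ℂ)⁻¹ • ∑ k ∈ Finset.range n, (T ^ (k + 1)) X with hmean
  have h1 : Tendsto (fun n => T (mean n)) atTop (nhds (T (Tinf X))) :=
    (hc.continuousAt).tendsto.comp (hinf X)
  have key : ∀ n : ℕ, T (mean n) =
      (((n : ℂ))⁻¹ * ((n : ℂ) + 1)) • mean (n + 1) - (n : ℂ)⁻¹ • (T X) := by
    intro n
    have hsum : ∑ k ∈ Finset.range (n + 1), (T ^ (k + 1)) X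
        = (∑ k ∈ Finset.range n, (T ^ (k + 2)) X) + T X := by
      rw [Finset.sum_range_succ']
      simp [pow_succ, pow_zero]
    have hTmean : T (mean n) = (n : ℂ)⁻¹ • ∑ k ∈ Finset.range n, (T ^ (k + 2)) X := by
      rw [hmean]
      simp only [LinearMap.map_smul, map_sum]
      congr 1
      refine Finset.sum_congr rfl fun k _ => ?_
      rw [show (T ^ (k + 2)) = T * T ^ (k + 1) by rw [← pow_succ']]
      rfl
    have hne : ((n : ℂ) + 1) ≠ 0 := Nat.cast_add_one_ne_zero n
    have hcast : (((n + 1 : ℕ) : ℂ)) = (n : ℂ) + 1 := by push_cast; ring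
    rw [hTmean, hmean]
    simp only []
    rw [smul_smul, hcast, mul_assoc, mul_inv_cancel₀ hne, mul_one, hsum, smul_add,
      add_sub_cancel_right]
  have h2 : Tendsto (fun n => T (mean n)) atTop (nhds (Tinf X)) := by
    have ha : Tendsto (fun n : ℕ => ((n : ℂ))⁻¹ * ((n : ℂ) + 1)) atTop (nhds 1) := by
      have hr : Tendsto (fun n : ℕ => ((n : ℝ))⁻¹ * ((n : ℝ) + 1)) atTop (nhds 1) := by
        have he : ∀ᶠ n : ℕ in atTop, ((n : ℝ))⁻¹ * ((n : ℝ) + 1) = 1 + (n : ℝ)⁻¹ := by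
          filter_upwards [eventually_gt_atTop 0] with n hn
          have : (n : ℝ) ≠ 0 := by exact_mod_cast hn.ne'
          field_simp
        rw [tendsto_congr' he]
        have := tendsto_inv_atTop_nhds_zero_nat (𝕜 := ℝ)
        simpa using (tendsto_const_nhds (x := (1:ℝ))).add this
      have := (Complex.continuous_ofReal.tendsto (1:ℝ)).comp hr
      rw [show (Complex.ofReal ∘ fun n : ℕ => ((n : ℝ))⁻¹ * ((n : ℝ) + 1))
          = fun n : ℕ => ((n : ℂ))⁻¹ * ((n : ℂ) + 1) from funext fun n => by
            simp [Function.comp]] at this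
      simpa using this
    have hb : Tendsto (fun n : ℕ => mean (n + 1)) atTop (nhds (Tinf X)) :=
      (hinf X).comp (tendsto_add_atTop_nat 1)
    have hcm : Tendsto (fun n : ℕ => (n : ℂ)⁻¹ • (T X)) atTop (nhds 0) := by
      have hz : Tendsto (fun n : ℕ => ((n : ℂ))⁻¹) atTop (nhds 0) := by
        have := (Complex.continuous_ofReal.tendsto (0:ℝ)).comp
          (tendsto_inv_atTop_nhds_zero_nat (𝕜 := ℝ))
        rw [show (Complex.ofReal ∘ fun n : ℕ => ((n : ℝ))⁻¹)
            = fun n : ℕ => ((n : ℂ))⁻¹ from funext fun n => by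
              simp [Function.comp]] at this
        simpa using this
      simpa using hz.smul (tendsto_const_nhds (x := T X))
    have := (ha.smul hb).sub hcm
    simpa only [one_smul, sub_zero] using (tendsto_congr fun n => (key n).symm).mp this
  exact tendsto_nhds_unique h1 h2

lemma cesaro_idem (hinf : IsCesaroProj T Tinf) (X : Matrix (Fin d) (Fin d) ℂ) :
    Tinf (Tinf X) = Tinf X := by
  have hfix : ∀ m : ℕ, (T ^ (m + 1)) (Tinf X) = Tinf X := by
    intro m
    induction m with
    | zero => simpa [pow_one] using cesaro_comm hinf X
    | succ k ih =>
      rw [show T ^ (k + 2) = T * T ^ (k + 1) by rw [← pow_succ']]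
      show T ((T ^ (k+1)) (Tinf X)) = Tinf X
      rw [ih]
      exact cesaro_comm hinf X
  have h1 : Tendsto (fun n : ℕ => (n : ℂ)⁻¹ • ∑ k ∈ Finset.range n, (T ^ (k + 1)) (Tinf X))
      atTop (nhds (Tinf (Tinf X))) := hinf (Tinf X)
  have h2 : ∀ᶠ n : ℕ in atTop,
      (n : ℂ)⁻¹ • ∑ k ∈ Finset.range n, (T ^ (k + 1)) (Tinf X) = Tinf X := by
    filter_upwards [eventually_gt_atTop 0] with n hn
    have hs : ∑ k ∈ Finset.range n, (T ^ (k + 1)) (Tinf X) = (n : ℂ) • Tinf X := by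
      rw [Finset.sum_congr rfl fun k _ => hfix k, Finset.sum_const, Finset.card_range,
        ← Nat.cast_smul_eq_nsmul ℂ]
    rw [hs, smul_smul, inv_mul_cancel₀ (by exact_mod_cast hn.ne' : (n:ℂ) ≠ 0), one_smul]
  have h3 : Tendsto (fun n : ℕ => (n : ℂ)⁻¹ • ∑ k ∈ Finset.range n, (T ^ (k + 1)) (Tinf X))
      atTop (nhds (Tinf X)) := by
    rw [tendsto_congr' h2]
    exact tendsto_const_nhds
  exact tendsto_nhds_unique h1 h3

end cesaro

/-- perturbation bound `‖ρ₁ − ρ₂‖₁ ≤ τ(Z(T₁)) ‖T₁ − T₂‖_{1→1}`. -/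
theorem fixed_point_perturbation_bound {d : ℕ} (T₁ T₂ Tinf Z : MatEnd d)
    (h₁TP : IsTP T₁) (h₁Pos : IsPos T₁) (h₂TP : IsTP T₂) (h₂Pos : IsPos T₂)
    (hinf : IsCesaroProj T₁ Tinf)
    (hZ₁ : Z * (1 - (T₁ - Tinf)) = 1) (hZ₂ : (1 - (T₁ - Tinf)) * Z = 1)
    (ρ₂ : Matrix (Fin d) (Fin d) ℂ) (hρ₂ : IsDensity ρ₂) (hfix₂ : T₂ ρ₂ = ρ₂) :
    traceNorm (Tinf ρ₂ - ρ₂) ≤ tau Z * norm1to1 (T₁ - T₂) := by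
  obtain ⟨hρpos, hρtr⟩ := hρ₂
  obtain ⟨Cz, hCz0, hCz⟩ := exists_traceNorm_bound Z
  obtain ⟨Cd, hCd0, hCd⟩ := exists_traceNorm_bound (T₁ - T₂)
  -- boundedness of the sup sets
  have hbddτ : BddAbove {r | ∃ σ : Matrix (Fin d) (Fin d) ℂ,
      σ.IsHermitian ∧ σ.trace = 0 ∧ σ ≠ 0 ∧ r = traceNorm (Z σ) / traceNorm σ} := by
    refine ⟨Cz, fun r hr => ?_⟩
    obtain ⟨σ, _, _, hσne, rfl⟩ := hr
    rw [div_le_iff₀ (traceNorm_pos σ hσne)]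
    exact hCz σ
  have hbddN : BddAbove {r | ∃ X : Matrix (Fin d) (Fin d) ℂ,
      X ≠ 0 ∧ r = traceNorm ((T₁ - T₂) X) / traceNorm X} := by
    refine ⟨Cd, fun r hr => ?_⟩
    obtain ⟨X, hXne, rfl⟩ := hr
    rw [div_le_iff₀ (traceNorm_pos X hXne)]
    exact hCd X
  have htau0 : 0 ≤ tau Z := by
    apply Real.sSup_nonneg
    rintro r ⟨σ, _, _, hσne, rfl⟩
    exact div_nonneg (traceNorm_nonneg _) (traceNorm_nonneg _)
  have hN0 : 0 ≤ norm1to1 (T₁ - T₂) := by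
    apply Real.sSup_nonneg
    rintro r ⟨X, hXne, rfl⟩
    exact div_nonneg (traceNorm_nonneg _) (traceNorm_nonneg _)
  -- key algebraic identity
  set σ : Matrix (Fin d) (Fin d) ℂ := ρ₂ - T₁ ρ₂ with hσ
  have hkey : (1 - (T₁ - Tinf)) (ρ₂ - Tinf ρ₂) = σ := by
    simp only [LinearMap.sub_apply, Module.End.one_apply, map_sub, hσ]
    rw [cesaro_comm hinf ρ₂, cesaro_idem hinf ρ₂]
    abel
  have hZv : ρ₂ - Tinf ρ₂ = Z σ := by
    have h := congrArg (fun (L : MatEnd d) => L (ρ₂ - Tinf ρ₂)) hZ₁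
    simp only [Module.End.mul_apply, Module.End.one_apply] at h
    rw [hkey] at h
    exact h.symm
  have hLHS : traceNorm (Tinf ρ₂ - ρ₂) = traceNorm (Z σ) := by
    rw [show Tinf ρ₂ - ρ₂ = -(ρ₂ - Tinf ρ₂) by abel, traceNorm_neg, hZv]
  have hσneg : σ = -((T₁ - T₂) ρ₂) := by
    simp only [LinearMap.sub_apply, hσ, hfix₂]
    abel
  by_cases hσ0 : σ = 0
  · rw [hLHS, hσ0, map_zero, traceNorm_zero]
    exact mul_nonneg htau0 hN0
  · -- σ is Hermitian and traceless
    have hσherm : σ.IsHermitian := by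
      have h1 : (T₁ ρ₂).IsHermitian := (h₁Pos ρ₂ hρpos).1
      have h2 : ρ₂.IsHermitian := hρpos.1
      exact h2.sub h1
    have hσtr : σ.trace = 0 := by
      rw [hσ, Matrix.trace_sub, h₁TP ρ₂, sub_self]
    have hσpos : 0 < traceNorm σ := traceNorm_pos σ hσ0
    -- bound traceNorm (Z σ) by tau Z * traceNorm σ
    have h1 : traceNorm (Z σ) / traceNorm σ ≤ tau Z :=
      le_csSup hbddτ ⟨σ, hσherm, hσtr, hσ0, rfl⟩
    have h2 : traceNorm (Z σ) ≤ tau Z * traceNorm σ := by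
      rw [← div_le_iff₀ hσpos] at *
      exact h1
    -- bound traceNorm σ by norm1to1 (T₁ - T₂)
    have hρne : ρ₂ ≠ 0 := by
      intro h
      rw [h] at hρtr
      simp at hρtr
    have hρtn : traceNorm ρ₂ = 1 := by
      rw [traceNorm_of_posSemidef hρpos, hρtr]
      rfl
    have h3 : traceNorm ((T₁ - T₂) ρ₂) / traceNorm ρ₂ ≤ norm1to1 (T₁ - T₂) :=
      le_csSup hbddN ⟨ρ₂, hρne, rfl⟩
    have h4 : traceNorm σ ≤ norm1to1 (T₁ - T₂) := by
      rw [hσneg, traceNorm_neg]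
      rw [hρtn, div_one] at h3
      exact h3
    calc traceNorm (Tinf ρ₂ - ρ₂) = traceNorm (Z σ) := hLHS
      _ ≤ tau Z * traceNorm σ := h2
      _ ≤ tau Z * norm1to1 (T₁ - T₂) := mul_le_mul_of_nonneg_left h4 htau0
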